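/- Let $\kappa>0$ and set $\tau=2e\max\{\kappa,2\}$. The function $w(y)=\kappa y+\frac{\tau}{y}e^{-y^2/4}$ satisfies $\mathcal J_1 w(y)\le 0$ for every $y\in(0,\infty)$. -/

import Mathlib

lemma hasDerivW (κ τ : ℝ) {x : ℝ} (hx : 0 < x) :
    HasDerivAt (fun t => κ * t + τ / t * Real.exp (-(t ^ 2) / 4))
      (κ - τ * Real.exp (-(x ^ 2) / 4) * (1 / x ^ 2 + 1 / 2)) x := by
  have h2 : HasDerivAt (fun t : ℝ => τ / t) (-(τ / x ^ 2)) x := by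
    simpa [div_eq_mul_inv, mul_comm] using (hasDerivAt_inv hx.ne').const_mul τ
  have hg : HasDerivAt (fun t : ℝ => -(t ^ 2) / 4) (-(x / 2)) x := by
    have h := ((hasDerivAt_pow 2 x).neg).div_const 4
    refine h.congr_deriv ?_; ring
  have hexp := hg.exp
  have hprod := h2.mul hexp
  have hsum := ((hasDerivAt_id x).const_mul κ).add hprod
  refine hsum.congr_deriv ?_
  field_simp
  ring

lemma hasDerivW1 (κ τ : ℝ) {x : ℝ} (hx : 0 < x) :
    HasDerivAt (fun t => κ - τ * Real.exp (-(t ^ 2) / 4) * (1 / t ^ 2 + 1 / 2))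
      (τ * Real.exp (-(x ^ 2) / 4) * (1 / (2 * x) + x / 4 + 2 / x ^ 3)) x := by
  have hg : HasDerivAt (fun t : ℝ => -(t ^ 2) / 4) (-(x / 2)) x := by
    have h := ((hasDerivAt_pow 2 x).neg).div_const 4
    refine h.congr_deriv ?_; ring
  have hexp := hg.exp
  have hinner : HasDerivAt (fun t : ℝ => 1 / t ^ 2 + 1 / 2)
      (-(2 * x) / (x ^ 2) ^ 2) x := by
    have h := ((hasDerivAt_pow 2 x).inv (pow_ne_zero 2 hx.ne')).add_const (1/2 : ℝ)
    simpa [one_div] using h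
  have hprod := (hexp.const_mul τ).mul hinner
  have hfull := (hasDerivAt_const x κ).sub hprod
  refine hfull.congr_deriv ?_
  field_simp
  ring

/-- The one-dimensional self-expander operator
`𝒥₁ u (y) = u''/(1+u'^2) + (y/2) u' - u/2`. -/
noncomputable def J1 (u : ℝ → ℝ) (y : ℝ) : ℝ :=
  deriv (deriv u) y / (1 + (deriv u y) ^ 2) + y / 2 * deriv u y - u y / 2

set_option maxHeartbeats 1000000 in
/-- For `κ > 0` and `τ = 2e·max{κ,2}`, the function `w(y) = κ y + (τ/y) e^{-y²/4}` satisfies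
`𝒥₁ w (y) ≤ 0` for every `y ∈ (0,∞)`. -/
theorem stmt2 (κ : ℝ) (hκ : 0 < κ) (τ : ℝ) (hτ : τ = 2 * Real.exp 1 * max κ 2) :
    ∀ y : ℝ, 0 < y →
      J1 (fun y => κ * y + τ / y * Real.exp (-(y ^ 2) / 4)) y ≤ 0 := by
  intro y hy
  have hτpos : 0 < τ := by rw [hτ]; positivity
  -- derivatives
  have hd1 : deriv (fun t => κ * t + τ / t * Real.exp (-(t ^ 2) / 4)) y
      = κ - τ * Real.exp (-(y ^ 2) / 4) * (1 / y ^ 2 + 1 / 2) := (hasDerivW κ τ hy).deriv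
  have hev : deriv (fun t => κ * t + τ / t * Real.exp (-(t ^ 2) / 4))
      =ᶠ[nhds y] (fun t => κ - τ * Real.exp (-(t ^ 2) / 4) * (1 / t ^ 2 + 1 / 2)) := by
    filter_upwards [isOpen_Ioi.mem_nhds (Set.mem_Ioi.mpr hy)] with x hx
    exact (hasDerivW κ τ hx).deriv
  have hd2 : deriv (deriv (fun t => κ * t + τ / t * Real.exp (-(t ^ 2) / 4))) y
      = τ * Real.exp (-(y ^ 2) / 4) * (1 / (2 * y) + y / 4 + 2 / y ^ 3) := by
    rw [hev.deriv_eq]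
    exact (hasDerivW1 κ τ hy).deriv
  rw [J1, hd1, hd2]
  -- abstract the exponential
  generalize hE : Real.exp (-(y ^ 2) / 4) = E
  have hEpos : 0 < E := hE ▸ Real.exp_pos _
  -- abstract the first derivative
  generalize hWeq : κ - τ * E * (1 / y ^ 2 + 1 / 2) = W
  have hA : (0 : ℝ) < 1 + W ^ 2 := by positivity
  -- the zeroth/first order terms
  have hlin : y / 2 * W - (κ * y + τ / y * E) / 2 = -(τ * E * (1 / y + y / 4)) := by
    rw [← hWeq]; field_simp; ring
  -- key inequality
  have key : 1 / (2 * y) + y / 4 + 2 / y ^ 3 ≤ (1 / y + y / 4) * (1 + W ^ 2) := by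
    rcases le_or_gt 2 y with h2 | h2
    · have hy3 : (0 : ℝ) < y ^ 3 := by positivity
      have h1 : 2 / y ^ 3 ≤ 1 / (2 * y) := by
        rw [div_le_div_iff₀ hy3 (by positivity)]
        nlinarith
      have h12 : 1 / (2 * y) + 1 / (2 * y) = 1 / y := by
        field_simp
        norm_num
      have hr : (1 : ℝ) ≤ 1 + W ^ 2 := by nlinarith [sq_nonneg W]
      have hs : 1 / y + y / 4 ≤ (1 / y + y / 4) * (1 + W ^ 2) :=
        le_mul_of_one_le_right (by positivity) hr
      linarith
    · -- y < 2 : exploit size of W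
      have hexp1 : Real.exp (-1 : ℝ) ≤ E := by
        rw [← hE]
        apply Real.exp_le_exp.mpr
        nlinarith
      have hτE : 2 * max κ 2 ≤ τ * E := by
        calc 2 * max κ 2 = 2 * Real.exp 1 * max κ 2 * Real.exp (-1) := by
              rw [Real.exp_neg]
              field_simp
          _ ≤ τ * E := by
              rw [hτ]
              exact mul_le_mul_of_nonneg_left hexp1 (by positivity)
      have hmax1 : κ ≤ max κ 2 := le_max_left _ _
      have hmax2 : (2 : ℝ) ≤ max κ 2 := le_max_right _ _
      have hy2 : (0 : ℝ) < y ^ 2 := by positivity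
      have hiy2 : (0 : ℝ) < 1 / y ^ 2 := by positivity
      have hWle : W ≤ -(4 / y ^ 2) := by
        rw [← hWeq]
        have u1 : 4 * (1 / y ^ 2) ≤ τ * E * (1 / y ^ 2) :=
          mul_le_mul_of_nonneg_right (by linarith) (le_of_lt hiy2)
        have u2 : 2 * max κ 2 * (1 / 2) ≤ τ * E * (1 / 2) :=
          mul_le_mul_of_nonneg_right hτE (by norm_num)
        have expand : τ * E * (1 / y ^ 2 + 1 / 2) = τ * E * (1 / y ^ 2) + τ * E * (1 / 2) := by
          ring
        have e2 : 4 / y ^ 2 = 4 * (1 / y ^ 2) := by ring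
        linarith
      have hWn : 4 / y ^ 2 ≤ -W := by linarith
      have hp : (0 : ℝ) < 4 / y ^ 2 := by positivity
      have h16 : 4 / y ^ 2 * (4 / y ^ 2) ≤ (-W) * (-W) :=
        mul_le_mul hWn hWn (le_of_lt hp) (by linarith)
      have h16' : 4 / y ^ 2 * (4 / y ^ 2) = 16 / y ^ 4 := by
        field_simp
        ring
      have hWW : (-W) * (-W) = W ^ 2 := by ring
      have h216 : 2 / y ^ 2 ≤ 16 / y ^ 4 := by
        rw [div_le_div_iff₀ hy2 (by positivity)]
        have hy4 : y ^ 2 < 4 := by nlinarith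
        nlinarith [mul_lt_mul_of_pos_left hy4 hy2]
      have hWsq : 2 / y ^ 2 ≤ W ^ 2 := by linarith
      have hpos : (0 : ℝ) ≤ 1 / y + y / 4 := by positivity
      have step : (1 / y + y / 4) * (1 + 2 / y ^ 2) ≤ (1 / y + y / 4) * (1 + W ^ 2) := by
        apply mul_le_mul_of_nonneg_left _ hpos
        linarith
      have expand : 1 / (2 * y) + y / 4 + 2 / y ^ 3 + 1 / y
          = (1 / y + y / 4) * (1 + 2 / y ^ 2) := by
        field_simp
        ring
      have h1y : (0 : ℝ) < 1 / y := by positivity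
      linarith
  have hnum : 0 < τ * E := by positivity
  have hmain : τ * E * (1 / (2 * y) + y / 4 + 2 / y ^ 3) / (1 + W ^ 2)
      ≤ τ * E * (1 / y + y / 4) := by
    rw [div_le_iff₀ hA]
    calc τ * E * (1 / (2 * y) + y / 4 + 2 / y ^ 3)
        ≤ τ * E * ((1 / y + y / 4) * (1 + W ^ 2)) :=
          mul_le_mul_of_nonneg_left key (le_of_lt hnum)
      _ = τ * E * (1 / y + y / 4) * (1 + W ^ 2) := by ring
  linarith [hlin, hmain]
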